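/- A compact Euclidean Coxeter polytope is simple: every vertex of a compact convex polytope in Euclidean n-space all of whose dihedral angles are of the form π/m (m ≥ 2 an integer) is contained in exactly n facets. -/

import Mathlib

open scoped RealInnerProductSpace

lemma obtuse_linearIndependent {ι : Type*} {E : Type*} [NormedAddCommGroup E]
    [InnerProductSpace ℝ E] (v : ι → E) (w : E) (hw : ∀ i, 0 < ⟪v i, w⟫)
    (hvv : ∀ i j, i ≠ j → ⟪v i, v j⟫ ≤ 0) : LinearIndependent ℝ v := by
  rw [linearIndependent_iff']
  intro s a h i hi
  set p : ι → ℝ := fun i => max (a i) 0 with hp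
  set q : ι → ℝ := fun i => max (-a i) 0 with hq
  have hpnn : ∀ i, 0 ≤ p i := fun i => le_max_right _ _
  have hqnn : ∀ i, 0 ≤ q i := fun i => le_max_right _ _
  have hpq : ∀ i, a i = p i - q i := by
    intro i
    rcases le_total 0 (a i) with h' | h'
    · simp [hp, hq, max_eq_left, h', neg_nonpos.mpr h']
    · simp [hp, hq, max_eq_right, h', neg_nonneg.mpr h']
  have hpq0 : ∀ i, p i * q i = 0 := by
    intro i
    rcases le_total 0 (a i) with h' | h'
    · simp [hq, max_eq_right (neg_nonpos.mpr h')]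
    · simp [hp, max_eq_right h']
  set y : E := ∑ j ∈ s, p j • v j with hy
  set z : E := ∑ j ∈ s, q j • v j with hz
  have hyz : y = z := by
    have h2 : y - z = 0 := by
      rw [hy, hz, ← Finset.sum_sub_distrib, ← h]
      congr 1; ext j; rw [← sub_smul, ← hpq]
    exact sub_eq_zero.mp h2
  have hinner : ⟪y, z⟫ ≤ 0 := by
    rw [hy, hz, sum_inner]
    apply Finset.sum_nonpos
    intro a' ha'
    rw [inner_sum]
    apply Finset.sum_nonpos
    intro b' hb'
    rw [real_inner_smul_left, real_inner_smul_right]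
    rcases eq_or_ne a' b' with rfl | hne
    · rw [← mul_assoc, hpq0 a']; ring_nf
      simp
    · have := hvv a' b' hne
      have := mul_nonneg (hpnn a') (hqnn b')
      nlinarith
  have hy0 : y = 0 := by
    have : ⟪y, y⟫ ≤ 0 := by rw [hyz] at hinner ⊢; exact hyz ▸ hinner
    exact real_inner_self_nonpos.mp this
  have hz0 : z = 0 := hyz ▸ hy0
  have hyw : (∑ j ∈ s, p j * ⟪v j, w⟫) = 0 := by
    have : ⟪y, w⟫ = 0 := by rw [hy0, inner_zero_left]
    rw [hy, sum_inner] at this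
    simpa [real_inner_smul_left] using this
  have hzw : (∑ j ∈ s, q j * ⟪v j, w⟫) = 0 := by
    have : ⟪z, w⟫ = 0 := by rw [hz0, inner_zero_left]
    rw [hz, sum_inner] at this
    simpa [real_inner_smul_left] using this
  have hp0 : p i = 0 := by
    have := (Finset.sum_eq_zero_iff_of_nonneg
      (fun j _ => mul_nonneg (hpnn j) (hw j).le)).mp hyw i hi
    have hwi := hw i
    rcases mul_eq_zero.mp this with h' | h'
    · exact h'
    · exact absurd h' (ne_of_gt hwi)
  have hq0 : q i = 0 := by
    have := (Finset.sum_eq_zero_iff_of_nonneg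
      (fun j _ => mul_nonneg (hqnn j) (hw j).le)).mp hzw i hi
    have hwi := hw i
    rcases mul_eq_zero.mp this with h' | h'
    · exact h'
    · exact absurd h' (ne_of_gt hwi)
  rw [hpq i, hp0, hq0, sub_zero]

/-- A compact Euclidean Coxeter polytope is simple: if `P ⊆ ℝⁿ` is a compact convex polytope
given by `k` irredundant half-spaces with unit outward normals `u i`, all of whose dihedral
angles are of the form `π / m` with integer `m ≥ 2`, then every vertex (extreme point) of `P`
is contained in exactly `n` facets. -/
theorem euclidean_coxeter_polytope_is_simple {n k : ℕ} (hn : 1 ≤ n)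
    (u : Fin k → EuclideanSpace ℝ (Fin n)) (c : Fin k → ℝ)
    (hu : ∀ i, ‖u i‖ = 1)
    (P : Set (EuclideanSpace ℝ (Fin n)))
    (hP : P = {x | ∀ i, ⟪u i, x⟫ ≤ c i})
    (hcomp : IsCompact P)
    (hint : (interior P).Nonempty)
    (hfacet : ∀ i, ∃ x ∈ P, ⟪u i, x⟫ = c i ∧ ∀ j, j ≠ i → ⟪u j, x⟫ < c j)
    (hangle : ∀ i j, i ≠ j → (∃ x ∈ P, ⟪u i, x⟫ = c i ∧ ⟪u j, x⟫ = c j) →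
      ∃ m : ℕ, 2 ≤ m ∧ ⟪u i, u j⟫ = -Real.cos (Real.pi / m))
    (x : EuclideanSpace ℝ (Fin n)) (hx : x ∈ Set.extremePoints ℝ P) :
    {i : Fin k | ⟪u i, x⟫ = c i}.ncard = n := by
  classical
  obtain ⟨hxP, hxext⟩ := hx
  set I : Set (Fin k) := {i | ⟪u i, x⟫ = c i} with hI
  have hxle : ∀ i, ⟪u i, x⟫ ≤ c i := by rw [hP] at hxP; exact hxP
  obtain ⟨z, hz⟩ := hint
  have hzP : z ∈ P := interior_subset hz
  have hzi : ∀ i, ⟪u i, z⟫ < c i := by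
    intro i
    rcases lt_or_eq_of_le (by rw [hP] at hzP; exact hzP i) with h | h
    · exact h
    exfalso
    obtain ⟨δ, hδ, hball⟩ := Metric.isOpen_iff.mp isOpen_interior z hz
    have hmem : z + (δ/2) • u i ∈ P := by
      apply interior_subset; apply hball
      rw [Metric.mem_ball, dist_eq_norm, add_sub_cancel_left, norm_smul, hu i,
        mul_one, Real.norm_eq_abs, abs_of_pos (half_pos hδ)]
      linarith
    rw [hP] at hmem
    have := hmem i
    rw [inner_add_right, real_inner_smul_right, real_inner_self_eq_norm_sq, hu i, h] at this
    nlinarith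
  have hwpos : ∀ i ∈ I, 0 < ⟪u i, x - z⟫ := by
    intro i hi
    rw [inner_sub_right]
    have : ⟪u i, x⟫ = c i := hi
    linarith [hzi i]
  have hobtuse : ∀ i ∈ I, ∀ j ∈ I, i ≠ j → ⟪u i, u j⟫ ≤ 0 := by
    intro i hi j hj hij
    obtain ⟨m, hm, heq⟩ := hangle i j hij ⟨x, hxP, hi, hj⟩
    rw [heq, neg_nonpos]
    apply Real.cos_nonneg_of_mem_Icc
    constructor
    · have : (0:ℝ) ≤ Real.pi / m := div_nonneg Real.pi_pos.le (by positivity)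
      linarith [Real.pi_pos]
    · apply div_le_div_of_nonneg_left Real.pi_pos.le (by norm_num)
      exact_mod_cast hm
  have hli : LinearIndependent ℝ (fun i : I => u i) :=
    obtuse_linearIndependent _ (x - z) (fun i => hwpos i i.2)
      (fun i j hij => hobtuse i i.2 j j.2 (fun h => hij (Subtype.ext h)))
  haveI : Fintype I := Set.Finite.fintype (Set.toFinite I)
  have hcard_le : I.ncard ≤ n := by
    have h1 := hli.fintype_card_le_finrank
    rw [finrank_euclideanSpace_fin] at h1
    rwa [← Nat.card_coe_set_eq, Nat.card_eq_fintype_card]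
  have hspan : Submodule.span ℝ (u '' I) = ⊤ := by
    by_contra hne
    have hbot : (Submodule.span ℝ (u '' I))ᗮ ≠ ⊥ := fun h =>
      hne (Submodule.orthogonal_eq_bot_iff.mp h)
    obtain ⟨v, hvmem, hv0⟩ := Submodule.exists_mem_ne_zero_of_ne_bot hbot
    have hvorth : ∀ i ∈ I, ⟪u i, v⟫ = 0 := fun i hi =>
      hvmem (u i) (Submodule.subset_span ⟨i, hi, rfl⟩)
    set U : Set (EuclideanSpace ℝ (Fin n)) := ⋂ i ∈ Iᶜ, {y | ⟪u i, y⟫ < c i} with hU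
    have hUopen : IsOpen U :=
      (Set.toFinite (Iᶜ : Set (Fin k))).isOpen_biInter fun i _ =>
        isOpen_lt (Continuous.inner continuous_const continuous_id) continuous_const
    have hxU : x ∈ U := by
      rw [hU]
      refine Set.mem_iInter₂.mpr fun i hi => ?_
      exact lt_of_le_of_ne (hxle i) hi
    obtain ⟨δ, hδ, hball⟩ := Metric.isOpen_iff.mp hUopen x hxU
    have hvn : (0:ℝ) < ‖v‖ := norm_pos_iff.mpr hv0
    set v' : EuclideanSpace ℝ (Fin n) := (δ / (2 * ‖v‖)) • v with hv'
    have hv'norm : ‖v'‖ = δ / 2 := by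
      rw [hv', norm_smul, Real.norm_eq_abs, abs_of_pos (by positivity)]
      field_simp
    have hv'0 : v' ≠ 0 := by
      intro h
      rw [h, norm_zero] at hv'norm
      linarith
    have horth : ∀ i ∈ I, ⟪u i, v'⟫ = 0 := by
      intro i hi
      rw [hv', real_inner_smul_right, hvorth i hi, mul_zero]
    have hmemP : ∀ s : EuclideanSpace ℝ (Fin n), (∀ i ∈ I, ⟪u i, s⟫ = 0) →
        ‖s‖ < δ → x + s ∈ P := by
      intro s hs hns
      rw [hP]
      intro i
      by_cases hi : i ∈ I
      · rw [inner_add_right, hs i hi, add_zero]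
        exact hxle i
      · have : x + s ∈ U := hball (by
          rw [Metric.mem_ball, dist_eq_norm, add_sub_cancel_left]; exact hns)
        rw [hU] at this
        exact le_of_lt (Set.mem_iInter₂.mp this i hi)
    have hyP : x + v' ∈ P := hmemP v' horth (by rw [hv'norm]; linarith)
    have hzP' : x + (-v') ∈ P := hmemP (-v')
      (fun i hi => by rw [inner_neg_right, horth i hi, neg_zero])
      (by rw [norm_neg, hv'norm]; linarith)
    have hseg : x ∈ openSegment ℝ (x + v') (x + (-v')) := by
      refine ⟨1/2, 1/2, by norm_num, by norm_num, by norm_num, ?_⟩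
      module
    have := hxext hyP hzP' hseg
    apply hv'0
    have : x + v' = x + 0 := by rw [this, add_zero]
    exact add_left_cancel this
  have hcard_ge : n ≤ I.ncard := by
    haveI : Fintype (u '' I) := Set.Finite.fintype (Set.toFinite _)
    have h1 := finrank_span_le_card (R := ℝ) (u '' I)
    rw [hspan, finrank_top, finrank_euclideanSpace_fin] at h1
    calc n ≤ (u '' I).toFinset.card := h1
      _ ≤ I.toFinset.card := by
          rw [Set.toFinset_image]
          exact Finset.card_image_le
      _ = I.ncard := (Set.ncard_eq_toFinset_card' I).symm
  exact le_antisymm hcard_le hcard_ge
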